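/- Let N_1, ..., N_{K-1} be i.i.d. uniform on [-1/2, 1/2), let G ∈ ℤ^{K×(K-1)} be an integer matrix whose row sums vanish (1_K^T G = 0) and such that any K-1 rows form a full-rank (hence unimodular over the relevant lattice) matrix. Define S_k := ((G N)_k) mod 1. Then each S_k is uniform on (-1/2, 1/2], any K-1 of the S_k are mutually independent, and (Σ_{k=1}^K S_k) mod 1 = 0. -/

import Mathlib

open MeasureTheory ProbabilityTheory

/-- Zero-centered modulo: `x mod 1 := x - ⌊x + 1/2⌋`. -/
noncomputable def zmod1 (x : ℝ) : ℝ := x - ⌊x + (1 : ℝ) / 2⌋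

section SecretKeyAux
open Set

lemma floor_eq_iff' (x : ℝ) (m : ℤ) :
    ⌊x + (1:ℝ)/2⌋ = m ↔ x - m ∈ Set.Ico (-(1/2):ℝ) (1/2) := by
  rw [Int.floor_eq_iff, Set.mem_Ico]
  constructor <;> rintro ⟨h1, h2⟩ <;> constructor <;> push_cast at * <;> linarith
lemma zmod1_mem (x : ℝ) : zmod1 x ∈ Set.Ico (-(1/2):ℝ) (1/2) :=
  (floor_eq_iff' x ⌊x + (1:ℝ)/2⌋).mp rfl

variable {n : ℕ}

def cube (n : ℕ) : Set (Fin n → ℝ) := Set.univ.pi fun _ => Set.Ico (-(1/2):ℝ) (1/2)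

lemma measurable_zmod1 : Measurable zmod1 := by
  unfold zmod1
  exact measurable_id.sub
    (measurable_from_top.comp ((measurable_id.add_const _).floor) :
      Measurable fun x : ℝ => (⌊x + (1:ℝ)/2⌋ : ℝ))

lemma measurableSet_cube : MeasurableSet (cube n) :=
  MeasurableSet.univ_pi fun _ => measurableSet_Ico

-- partition: translates of the cube by integer vectors cover ℝ^n disjointly
lemma iUnion_translates : (⋃ w : Fin n → ℤ, ((fun y => y + fun i => ((w i : ℝ))) ⁻¹' cube n)) = univ := by
  ext y
  simp only [mem_iUnion, mem_preimage, mem_univ, iff_true]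
  refine ⟨fun i => -⌊y i + (1:ℝ)/2⌋, fun i _ => ?_⟩
  show y i + ((-⌊y i + (1:ℝ)/2⌋ : ℤ) : ℝ) ∈ Set.Ico (-(1/2):ℝ) (1/2)
  have h : y i + ((-⌊y i + (1:ℝ)/2⌋ : ℤ) : ℝ) = zmod1 (y i) := by
    push_cast [zmod1]; ring
  rw [h]; exact zmod1_mem _

lemma disjoint_translates : Pairwise fun (w w' : Fin n → ℤ) =>
    Disjoint ((fun y => y + fun i => ((w i : ℝ))) ⁻¹' cube n)
      ((fun y => y + fun i => ((w' i : ℝ))) ⁻¹' cube n) := by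
  intro w w' hww'
  rw [Set.disjoint_left]
  rintro y hy hy'
  apply hww'
  funext i
  have h1 := hy i (mem_univ i)
  have h2 := hy' i (mem_univ i)
  have e1 : ⌊y i + (1:ℝ)/2⌋ = -w i := by
    rw [floor_eq_iff']; push_cast; simpa [sub_neg_eq_add] using h1
  have e2 : ⌊y i + (1:ℝ)/2⌋ = -w' i := by
    rw [floor_eq_iff']; push_cast; simpa [sub_neg_eq_add] using h2
  omega

lemma sum_translates (t : Set (Fin n → ℝ)) (ht : MeasurableSet t) :
    ∑' w : Fin n → ℤ, volume (t ∩ ((fun y => y + fun i => ((w i : ℝ))) ⁻¹' cube n)) = volume t := by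
  rw [← measure_iUnion]
  · rw [← Set.inter_iUnion, iUnion_translates, Set.inter_univ]
  · intro w w' hww'
    exact (disjoint_translates hww').mono inter_subset_right inter_subset_right
  · exact fun w => ht.inter ((measurable_id.add_const _) measurableSet_cube)

lemma tsum_shift (t : Set (Fin n → ℝ)) (ht : MeasurableSet t) :
    ∑' w : Fin n → ℤ, volume (((fun x => x - fun i => ((w i : ℝ))) ⁻¹' t) ∩ cube n) = volume t := by
  rw [← sum_translates t ht]
  congr 1
  funext w
  have hset : ((fun x => x - fun i => ((w i : ℝ))) ⁻¹' t) ∩ cube n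
      = (fun x => x - fun i => ((w i : ℝ))) ⁻¹' (t ∩ ((fun y => y + fun i => ((w i : ℝ))) ⁻¹' cube n)) := by
    ext x
    simp only [mem_inter_iff, mem_preimage, and_congr_right_iff]
    intro _
    constructor
    · intro hx; simpa using hx
    · intro hx; simpa using hx
  rw [hset]
  have : (fun x : Fin n → ℝ => x - fun i => ((w i : ℝ))) = fun x => x + (-fun i => ((w i : ℝ))) := by
    funext x; simp [sub_eq_add_neg]
  rw [this, measure_preimage_add_right]

lemma map_core (M : Matrix (Fin n) (Fin n) ℤ) (hM : IsUnit M.det) :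
    Measure.map (fun x (i : Fin n) => zmod1 (∑ j, (M i j : ℝ) * x j))
      (volume.restrict (cube n)) = volume.restrict (cube n) := by
  classical
  set A : Matrix (Fin n) (Fin n) ℝ := M.map (fun z => (z : ℝ)) with hA
  set L : (Fin n → ℝ) →ₗ[ℝ] (Fin n → ℝ) := Matrix.toLin' A with hLdef
  have hL : ∀ x (i : Fin n), L x i = ∑ j, (M i j : ℝ) * x j := by
    intro x i
    simp [hLdef, Matrix.toLin'_apply, Matrix.mulVec, dotProduct, hA, Matrix.map_apply]
  have hmeasL : Measurable L := by
    apply measurable_pi_lambda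
    intro i
    have : (fun x : Fin n → ℝ => L x i) = fun x => ∑ j, (M i j : ℝ) * x j := by
      funext x; exact hL x i
    rw [this]
    exact Finset.measurable_sum _ fun j _ => (measurable_pi_apply j).const_mul _
  set F : (Fin n → ℝ) → (Fin n → ℝ) := fun x i => zmod1 (L x i) with hFdef
  have hFeq : (fun x (i : Fin n) => zmod1 (∑ j, (M i j : ℝ) * x j)) = F := by
    funext x i; rw [hFdef]; simp only [hL]
  have hmeasF : Measurable F :=
    measurable_pi_lambda _ fun i => measurable_zmod1.comp ((measurable_pi_apply i).comp hmeasL)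
  have hrangeF : ∀ x, F x ∈ cube n := fun x i _ => zmod1_mem _
  -- determinant
  have hdetL : LinearMap.det L = ((M.det : ℤ) : ℝ) := by
    rw [hLdef, LinearMap.det_toLin', hA]
    rw [show M.map (fun z => (z:ℝ)) = (Int.castRingHom ℝ).mapMatrix M from rfl,
      ← RingHom.map_det]
    rfl
  have hdet1 : |LinearMap.det L| = 1 := by
    rcases Int.isUnit_iff.mp hM with h | h <;> rw [hdetL, h] <;> norm_num
  have hdetne : LinearMap.det L ≠ 0 := by
    intro h; rw [h] at hdet1; norm_num at hdet1
  have hvolL : ∀ (t : Set (Fin n → ℝ)), volume (L ⁻¹' t) = volume t := by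
    intro t
    rw [Measure.addHaar_preimage_linearMap volume hdetne t]
    rw [abs_inv, hdet1]
    norm_num
  -- inverse matrix over ℤ
  have hMinv : M⁻¹ * M = 1 := Matrix.nonsing_inv_mul M hM
  have hMinv' : M * M⁻¹ = 1 := Matrix.mul_nonsing_inv M hM
  set eZ : (Fin n → ℤ) ≃ (Fin n → ℤ) :=
    { toFun := fun w => M.mulVec w
      invFun := fun z => (M⁻¹).mulVec z
      left_inv := fun w => by
        show M⁻¹.mulVec (M.mulVec w) = w
        rw [Matrix.mulVec_mulVec, hMinv, Matrix.one_mulVec]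
      right_inv := fun z => by
        show M.mulVec (M⁻¹.mulVec z) = z
        rw [Matrix.mulVec_mulVec, hMinv', Matrix.one_mulVec] } with heZ
  -- key cast identity : L applied to integer vector
  have hcast : ∀ w : Fin n → ℤ, (fun i => ((M.mulVec w i : ℤ) : ℝ)) = L (fun i => ((w i : ℝ))) := by
    intro w
    funext i
    rw [hL]
    show ((∑ j, M i j * w j : ℤ) : ℝ) = _
    push_cast
    rfl
  refine Measure.ext fun s hs => ?_
  rw [hFeq, Measure.map_apply hmeasF hs, Measure.restrict_apply hs,
    Measure.restrict_apply (hmeasF hs)]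
  set s' := s ∩ cube n with hs'def
  have hs' : MeasurableSet s' := hs.inter measurableSet_cube
  have hs'sub : s' ⊆ cube n := inter_subset_right
  have hFs : F ⁻¹' s ∩ cube n = F ⁻¹' s' ∩ cube n := by
    ext x
    simp only [hs'def, mem_inter_iff, mem_preimage, and_congr_left_iff]
    exact fun _ => ⟨fun h => ⟨h, hrangeF x⟩, fun h => h.1⟩
  rw [hFs]
  -- decomposition
  have hdecomp : F ⁻¹' s' ∩ cube n =
      ⋃ z : Fin n → ℤ, ((fun x => L x - fun i => ((z i : ℝ))) ⁻¹' s') ∩ cube n := by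
    ext x
    simp only [mem_iUnion, mem_inter_iff, mem_preimage]
    constructor
    · rintro ⟨hxs, hxc⟩
      refine ⟨fun i => ⌊L x i + (1:ℝ)/2⌋, ?_, hxc⟩
      have : (L x - fun i => ((⌊L x i + (1:ℝ)/2⌋ : ℤ) : ℝ)) = F x := by
        funext i; simp [hFdef, zmod1]
      rw [this]; exact hxs
    · rintro ⟨z, hxs, hxc⟩
      refine ⟨?_, hxc⟩
      have hz : ∀ i, z i = ⌊L x i + (1:ℝ)/2⌋ := by
        intro i
        have hmem := hs'sub hxs i (mem_univ i)
        rw [eq_comm, floor_eq_iff']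
        exact hmem
      have : (L x - fun i => ((z i : ℝ))) = F x := by
        funext i
        simp only [Pi.sub_apply, hFdef, zmod1, hz i]
      rw [← this]; exact hxs
  rw [hdecomp, measure_iUnion]
  rotate_left
  · -- pairwise disjoint
    intro z z' hzz'
    simp only [Function.onFun]
    rw [Set.disjoint_left]
    rintro x ⟨hxs, hxc⟩ ⟨hxs', _⟩
    apply hzz'
    funext i
    have h1 : z i = ⌊L x i + (1:ℝ)/2⌋ := by
      rw [eq_comm, floor_eq_iff']; exact hs'sub hxs i (mem_univ i)
    have h2 : z' i = ⌊L x i + (1:ℝ)/2⌋ := by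
      rw [eq_comm, floor_eq_iff']; exact hs'sub hxs' i (mem_univ i)
    rw [h1, h2]
  · exact fun z => ((hmeasL.sub measurable_const) hs').inter measurableSet_cube
  -- reindex and compute
  rw [← eZ.tsum_eq]
  have hpiece : ∀ w : Fin n → ℤ,
      ((fun x => L x - fun i => ((eZ w i : ℝ))) ⁻¹' s') ∩ cube n
      = ((fun x => x - fun i => ((w i : ℝ))) ⁻¹' (L ⁻¹' s')) ∩ cube n := by
    intro w
    have heq : (fun i => ((eZ w i : ℝ))) = L (fun i => ((w i : ℝ))) := hcast w
    ext x
    simp only [mem_inter_iff, mem_preimage, heq, and_congr_left_iff]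
    intro _
    rw [← map_sub L]
  simp only [hpiece]
  rw [tsum_shift _ (hmeasL hs'), hvolL]


lemma zmod1_neg_intCast (m : ℤ) : zmod1 (-(m:ℝ)) = 0 := by
  have h : ⌊-(m:ℝ) + (1:ℝ)/2⌋ = -m := by
    rw [floor_eq_iff']
    constructor <;> push_cast <;> norm_num
  rw [zmod1, h]
  push_cast; ring

noncomputable def nuIco : Measure ℝ := volume.restrict (Set.Ico (-(1/2):ℝ) (1/2))

instance : IsProbabilityMeasure nuIco := by
  constructor
  rw [nuIco, Measure.restrict_apply MeasurableSet.univ, Set.univ_inter, Real.volume_Ico]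
  norm_num

lemma restrict_cube_eq_pi :
    volume.restrict (cube n) = Measure.pi (fun _ : Fin n => nuIco) := by
  refine (Measure.pi_eq fun s hs => ?_).symm
  rw [Measure.restrict_apply (MeasurableSet.univ_pi hs)]
  have h : Set.univ.pi s ∩ cube n
      = Set.univ.pi (fun i => s i ∩ Set.Ico (-(1/2):ℝ) (1/2)) := by
    ext x
    simp only [cube, Set.mem_inter_iff, Set.mem_pi, Set.mem_univ, forall_const,
      Set.mem_inter_iff]
    exact ⟨fun ⟨h1, h2⟩ i => ⟨h1 i, h2 i⟩, fun h => ⟨fun i => (h i).1, fun i => (h i).2⟩⟩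
  rw [h, volume_pi_pi]
  exact Finset.prod_congr rfl fun i _ =>
    ((Measure.restrict_apply (hs i)).symm : _)


end SecretKeyAux

/-- Secret-key generation: with `N_1, …, N_{K-1}` i.i.d. `Unif([-1/2,1/2))` and an integer
matrix `G ∈ ℤ^{K×(K-1)}` whose columns each sum to zero (`1_K^T G = 0`) and such that any
`K-1` rows form a full-rank (unimodular) matrix, the keys `S_k := ((G N)_k) mod 1` are each
uniform on `(-1/2, 1/2]`, any `K-1` of them are mutually independent, and
`(Σ_k S_k) mod 1 = 0`. -/
theorem secret_key_generation {Ω : Type*} [MeasurableSpace Ω]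
    (μ : Measure Ω) [IsProbabilityMeasure μ]
    (K : ℕ) (hK : 2 ≤ K)
    (G : Matrix (Fin K) (Fin (K - 1)) ℤ)
    (hrowsum : ∀ j, ∑ k, G k j = 0)
    (hfull : ∀ k0 : Fin K,
      IsUnit (Matrix.det (Matrix.of fun (i j : Fin (K - 1)) =>
        G (if h : (i : ℕ) < (k0 : ℕ) then ⟨i, by omega⟩ else ⟨(i : ℕ) + 1, by omega⟩) j)))
    (N : Fin (K - 1) → Ω → ℝ) (hNmeas : ∀ j, Measurable (N j))
    (hNindep : iIndepFun N μ)
    (hNunif : ∀ j, μ.map (N j) = volume.restrict (Set.Ico (-(1 / 2) : ℝ) (1 / 2)))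
    (S : Fin K → Ω → ℝ)
    (hS : ∀ k ω, S k ω = zmod1 (∑ j, (G k j : ℝ) * N j ω)) :
    (∀ k, μ.map (S k) = volume.restrict (Set.Ioc (-(1 / 2) : ℝ) (1 / 2))) ∧
    (∀ k0 : Fin K,
      iIndepFun (fun i : {k : Fin K // k ≠ k0} => S i) μ) ∧
    (∀ ω, zmod1 (∑ k, S k ω) = 0) := by
    classical
  have hSmeas : ∀ k, Measurable (S k) := by
    intro k
    have hkeq : S k = fun ω => zmod1 (∑ j, (G k j : ℝ) * N j ω) := funext fun ω => hS k ω
    rw [hkeq]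
    exact measurable_zmod1.comp (Finset.measurable_sum _ fun j _ => ((hNmeas j).const_mul _))
  set emb : Fin K → Fin (K-1) → Fin K := fun k0 i =>
    if h : (i : ℕ) < (k0 : ℕ) then ⟨i, by omega⟩ else ⟨(i:ℕ)+1, by omega⟩ with hembdef
  have hemb_ne : ∀ k0 i, emb k0 i ≠ k0 := by
    intro k0 i
    simp only [hembdef]
    split
    · exact Fin.ne_of_val_ne (by simp; omega)
    · next h => exact Fin.ne_of_val_ne (by simp; omega)
  have hemb_inj : ∀ k0, Function.Injective (emb k0) := by
    intro k0 i i' h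
    have hv := congrArg Fin.val h
    simp only [hembdef] at hv
    apply Fin.ext
    split at hv <;> split at hv <;> simp_all <;> omega
  have hemb_surj : ∀ (k0 k : Fin K), k ≠ k0 → ∃ i, emb k0 i = k := by
    intro k0 k hk
    have hkv : (k:ℕ) ≠ (k0:ℕ) := fun h => hk (Fin.ext h)
    by_cases h : (k:ℕ) < (k0:ℕ)
    · refine ⟨⟨(k:ℕ), by omega⟩, ?_⟩
      simp only [hembdef]
      rw [dif_pos (by simpa using h)]
    · refine ⟨⟨(k:ℕ) - 1, by omega⟩, ?_⟩
      simp only [hembdef]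
      rw [dif_neg (by simp; omega)]
      exact Fin.ext (by simp; omega)
  have hbij : ∀ k0 : Fin K, Function.Bijective
      (fun i : Fin (K-1) => (⟨emb k0 i, hemb_ne k0 i⟩ : {k : Fin K // k ≠ k0})) := by
    intro k0
    constructor
    · intro a b hab
      exact hemb_inj k0 (congrArg Subtype.val hab)
    · rintro ⟨k, hk⟩
      obtain ⟨i, hi⟩ := hemb_surj k0 k hk
      exact ⟨i, Subtype.ext hi⟩
  -- joint law of the noise vector
  have hNvecmeas : Measurable (fun ω (j : Fin (K-1)) => N j ω) :=
    measurable_pi_lambda _ hNmeas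
  have hjoint : μ.map (fun ω (j : Fin (K-1)) => N j ω)
      = Measure.pi (fun _ : Fin (K-1) => nuIco) := by
    refine (Measure.pi_eq fun s hs => ?_).symm
    rw [Measure.map_apply hNvecmeas (MeasurableSet.univ_pi hs)]
    have hpre : (fun ω (j : Fin (K-1)) => N j ω) ⁻¹' Set.univ.pi s = ⋂ j, N j ⁻¹' s j := by
      ext ω; simp [Set.mem_pi]
    have hbi : (⋂ j, N j ⁻¹' s j) = ⋂ j ∈ Finset.univ, N j ⁻¹' s j := by simp
    rw [hpre, hbi, hNindep.measure_inter_preimage_eq_mul Finset.univ (fun i _ => hs i)]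
    exact Finset.prod_congr rfl fun j _ => by
      rw [← Measure.map_apply (hNmeas j) (hs j), hNunif j]; rfl
  -- master lemma
  have hSvecmeas : ∀ k0, Measurable (fun ω (i : Fin (K-1)) => S (emb k0 i) ω) :=
    fun k0 => measurable_pi_lambda _ fun i => hSmeas (emb k0 i)
  have hmaster : ∀ k0 : Fin K,
      μ.map (fun ω (i : Fin (K-1)) => S (emb k0 i) ω)
        = Measure.pi (fun _ : Fin (K-1) => nuIco) := by
    intro k0
    set Mk : Matrix (Fin (K-1)) (Fin (K-1)) ℤ := Matrix.of fun i j => G (emb k0 i) j with hMk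
    have hMkunit : IsUnit Mk.det := hfull k0
    have hFmeas : Measurable (fun (x : Fin (K-1) → ℝ) (i : Fin (K-1)) => zmod1 (∑ j, (Mk i j : ℝ) * x j)) :=
      measurable_pi_lambda _ fun i => measurable_zmod1.comp
        (Finset.measurable_sum _ fun j _ => (measurable_pi_apply j).const_mul _)
    have hcomp : (fun ω (i : Fin (K-1)) => S (emb k0 i) ω)
        = (fun (x : Fin (K-1) → ℝ) (i : Fin (K-1)) => zmod1 (∑ j, (Mk i j : ℝ) * x j)) ∘ (fun ω j => N j ω) := by
      funext ω
      funext i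
      simp only [Function.comp_apply, hS]
      rfl
    rw [hcomp, ← Measure.map_map hFmeas hNvecmeas, hjoint, ← restrict_cube_eq_pi,
      map_core Mk hMkunit, restrict_cube_eq_pi]
  -- marginals
  have hmarg : ∀ k : Fin K, μ.map (S k) = nuIco := by
    intro k
    obtain ⟨k0, hk0⟩ : ∃ k0 : Fin K, k ≠ k0 := by
      by_cases h : (k:ℕ) = 0
      · exact ⟨⟨1, by omega⟩, Fin.ne_of_val_ne (by simp; omega)⟩
      · exact ⟨⟨0, by omega⟩, Fin.ne_of_val_ne (by simp; omega)⟩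
    obtain ⟨i, hi⟩ := hemb_surj k0 k hk0
    refine Measure.ext fun A hA => ?_
    rw [Measure.map_apply (hSmeas k) hA]
    have hpre : S k ⁻¹' A
        = (fun ω (i' : Fin (K-1)) => S (emb k0 i') ω) ⁻¹' ((fun x : Fin (K-1) → ℝ => x i) ⁻¹' A) := by
      ext ω; simp [hi]
    rw [hpre, ← Measure.map_apply (hSvecmeas k0) ((measurable_pi_apply i) hA), hmaster k0]
    have hcyl : (fun x : Fin (K-1) → ℝ => x i) ⁻¹' A
        = Set.univ.pi (fun j => if j = i then A else Set.univ) := by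
      ext x
      simp only [Set.mem_preimage, Set.mem_pi, Set.mem_univ, forall_const]
      constructor
      · intro hx j; split <;> simp_all
      · intro hx; have := hx i; simp at this; exact this
    rw [hcyl, Measure.pi_pi]
    have hfun : (fun j : Fin (K-1) => nuIco (if j = i then A else Set.univ))
        = fun j => if j = i then nuIco A else 1 := by
      funext j; split <;> simp
    rw [hfun]
    simp
  have hIcoIoc : nuIco = volume.restrict (Set.Ioc (-(1 / 2) : ℝ) (1 / 2)) :=
    Measure.restrict_congr_set ((Ioo_ae_eq_Ico).symm.trans Ioo_ae_eq_Ioc)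
  refine ⟨fun k => by rw [hmarg k, hIcoIoc], ?_, ?_⟩
  · -- independence
    intro k0
    rw [iIndepFun_iff_measure_inter_preimage_eq_mul]
    intro T sets hsets
    have hfac : ∀ i : {k : Fin K // k ≠ k0}, i ∈ T → μ (S i ⁻¹' sets i) = nuIco (sets i) := by
      intro i hi
      rw [← Measure.map_apply (hSmeas i) (hsets i hi), hmarg i]
    set e : Fin (K-1) ≃ {k : Fin K // k ≠ k0} := Equiv.ofBijective _ (hbij k0) with he
    set B : Fin (K-1) → Set ℝ := fun j => if e j ∈ T then sets (e j) else Set.univ with hB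
    have hBmeas : ∀ j, MeasurableSet (B j) := by
      intro j
      rw [hB]
      by_cases h : e j ∈ T
      · simpa [h] using hsets (e j) h
      · simp [h]
    have hpre : (⋂ i ∈ T, S i.val ⁻¹' sets i)
        = (fun ω (j : Fin (K-1)) => S (emb k0 j) ω) ⁻¹' Set.univ.pi B := by
      ext ω
      simp only [Set.mem_iInter, Set.mem_preimage, Set.mem_pi, Set.mem_univ, forall_const, hB]
      constructor
      · intro h j
        split
        · next hj => exact h (e j) hj
        · trivial
      · intro h i hi
        have hji := h (e.symm i)
        have hval : emb k0 (e.symm i) = i.val := congrArg Subtype.val (e.apply_symm_apply i)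
        rw [e.apply_symm_apply, if_pos hi] at hji
        rw [hval] at hji
        exact hji
    rw [hpre, ← Measure.map_apply (hSvecmeas k0) (MeasurableSet.univ_pi hBmeas),
      hmaster k0, Measure.pi_pi]
    have h1 : (fun j => nuIco (B j)) = fun j => if e j ∈ T then nuIco (sets (e j)) else 1 := by
      funext j; by_cases h : e j ∈ T <;> simp [hB, h]
    calc ∏ j, nuIco (B j)
        = ∏ j, (if e j ∈ T then nuIco (sets (e j)) else 1) := by rw [h1]
      _ = ∏ i : {k : Fin K // k ≠ k0}, (if i ∈ T then nuIco (sets i) else 1) :=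
          e.prod_comp (fun i => if i ∈ T then nuIco (sets i) else 1)
      _ = ∏ i ∈ T, nuIco (sets i) := by
          rw [Finset.prod_ite_mem, Finset.univ_inter]
      _ = ∏ i ∈ T, μ (S i ⁻¹' sets i) := Finset.prod_congr rfl fun i hi => (hfac i hi).symm
  · -- zero sum
    intro ω
    have hS' : ∀ k, S k ω = (∑ j, (G k j : ℝ) * N j ω)
        - ((⌊(∑ j, (G k j : ℝ) * N j ω) + (1:ℝ)/2⌋ : ℤ) : ℝ) := fun k => hS k ω
    have h0 : ∑ k, ∑ j, (G k j : ℝ) * N j ω = 0 := by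
      rw [Finset.sum_comm]
      have hz : ∀ j, ∑ k, (G k j : ℝ) * N j ω = 0 := by
        intro j
        rw [← Finset.sum_mul]
        have hc : (∑ k, (G k j : ℝ)) = 0 := by
          exact_mod_cast congrArg (fun z : ℤ => (z : ℝ)) (hrowsum j)
        rw [hc, zero_mul]
      simp [hz]
    have hsum : ∑ k, S k ω
        = -((∑ k, ⌊(∑ j, (G k j : ℝ) * N j ω) + (1:ℝ)/2⌋ : ℤ) : ℝ) := by
      push_cast
      simp only [hS']
      rw [Finset.sum_sub_distrib, h0, zero_sub]
    rw [hsum, zmod1_neg_intCast]
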